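/- The number of states of the DAWG of a string S of length N is O(N): the number of equivalence classes of the end-position equivalence relation on nonempty substrings of S is at most 2N - 1 (for N ≥ 2). -/

import Mathlib

/-- `endPos S u` is the set of (0-indexed) ending positions `j` of occurrences of `u` in `S`,
i.e. positions `j` such that `u` is a suffix of `S[0..j]`. -/
def endPos {α : Type*} (S u : List α) : Set ℕ := {j | j < S.length ∧ u <:+ S.take (j + 1)}

/-- Bound on laminar families of nonempty subsets. -/
lemma laminar_aux : ∀ (n : ℕ) (X : Finset ℕ) (F : Finset (Finset ℕ)),
    X.card ≤ n →
    (∀ A ∈ F, A ⊆ X ∧ A.Nonempty) →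
    (∀ A ∈ F, ∀ B ∈ F, A ⊆ B ∨ B ⊆ A ∨ Disjoint A B) →
    F.card ≤ 2 * X.card - 1 := by
  intro n
  induction n with
  | zero =>
    intro X F hX hsub _
    have hXe : X = ∅ := Finset.card_eq_zero.mp (Nat.le_zero.mp hX)
    have : F = ∅ := by
      apply Finset.eq_empty_of_forall_notMem
      intro A hA
      obtain ⟨hsA, hne⟩ := hsub A hA
      rw [hXe, Finset.subset_empty] at hsA
      exact hne.ne_empty hsA
    simp [this]
  | succ n ih =>
    intro X F hX hsub hlam
    by_cases hF : F = ∅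
    · simp [hF]
    by_cases hstrict : ∃ A ∈ F, A ⊂ X
    · -- pick a strict subset of maximal cardinality
      obtain ⟨A, hAmem, hAmax⟩ := Finset.exists_max_image (F.filter (· ⊂ X)) Finset.card
        (by obtain ⟨A, hA, hAX⟩ := hstrict; exact ⟨A, Finset.mem_filter.mpr ⟨hA, hAX⟩⟩)
      rw [Finset.mem_filter] at hAmem
      obtain ⟨hAF, hAX⟩ := hAmem
      have hAne : A.Nonempty := (hsub A hAF).2
      have hA1 : 1 ≤ A.card := Finset.card_pos.mpr hAne
      have hAlt : A.card < X.card := Finset.card_lt_card hAX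
      -- key: any B in F not contained in A and ≠ X is disjoint from A
      have key : ∀ B ∈ F, ¬ B ⊆ A → B ≠ X → Disjoint B A := by
        intro B hBF hBA hBX
        rcases hlam A hAF B hBF with h1 | h2 | h3
        · -- A ⊆ B
          have hBsub : B ⊂ X := lt_of_le_of_ne (hsub B hBF).1 hBX
          have := hAmax B (Finset.mem_filter.mpr ⟨hBF, hBsub⟩)
          have : A = B := Finset.eq_of_subset_of_card_le h1 this
          exact absurd (this ▸ Finset.Subset.refl A) hBA
        · exact absurd h2 hBA
        · exact h3.symm
      set F1 := F.filter (· ⊆ A) with hF1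
      set F2 := F.filter (fun B => ¬ B ⊆ A ∧ B ≠ X) with hF2
      have hsplit : F ⊆ F1 ∪ F2 ∪ {X} := by
        intro B hB
        by_cases h1 : B ⊆ A
        · exact Finset.mem_union_left _ (Finset.mem_union_left _
            (Finset.mem_filter.mpr ⟨hB, h1⟩))
        by_cases h2 : B = X
        · exact Finset.mem_union_right _ (by simp [h2])
        · exact Finset.mem_union_left _ (Finset.mem_union_right _
            (Finset.mem_filter.mpr ⟨hB, h1, h2⟩))
      have hc1 : F1.card ≤ 2 * A.card - 1 := by
        apply ih A F1 (by omega)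
        · intro B hB
          rw [Finset.mem_filter] at hB
          exact ⟨hB.2, (hsub B hB.1).2⟩
        · intro B hB C hC
          rw [Finset.mem_filter] at hB hC
          exact hlam B hB.1 C hC.1
      have hcdiff : (X \ A).card = X.card - A.card :=
        Finset.card_sdiff_of_subset hAX.subset
      have hc2 : F2.card ≤ 2 * (X \ A).card - 1 := by
        apply ih (X \ A) F2 (by omega)
        · intro B hB
          rw [Finset.mem_filter] at hB
          refine ⟨?_, (hsub B hB.1).2⟩
          intro x hx
          rw [Finset.mem_sdiff]
          refine ⟨(hsub B hB.1).1 hx, fun hxA => ?_⟩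
          simpa using (key B hB.1 hB.2.1 hB.2.2).le_bot (Finset.mem_inter.mpr ⟨hx, hxA⟩)
        · intro B hB C hC
          rw [Finset.mem_filter] at hB hC
          exact hlam B hB.1 C hC.1
      have := Finset.card_le_card hsplit
      have hu1 : (F1 ∪ F2 ∪ {X}).card ≤ F1.card + F2.card + 1 := by
        calc (F1 ∪ F2 ∪ {X}).card ≤ (F1 ∪ F2).card + ({X} : Finset (Finset ℕ)).card :=
              Finset.card_union_le _ _
          _ ≤ F1.card + F2.card + 1 := by
              have := Finset.card_union_le F1 F2
              simp only [Finset.card_singleton]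
              omega
      omega
    · -- no strict subset: every member equals X
      push_neg at hstrict
      have hFsub : F ⊆ {X} := by
        intro B hB
        have h1 := (hsub B hB).1
        have h2 := hstrict B hB
        rw [Finset.mem_singleton]
        by_contra hne
        exact h2 (lt_of_le_of_ne h1 hne)
      have hXF : X ∈ F := by
        obtain ⟨B, hB⟩ := Finset.nonempty_iff_ne_empty.mpr hF
        have := hFsub hB
        rw [Finset.mem_singleton] at this
        exact this ▸ hB
      have hXne : X.Nonempty := (hsub X hXF).2
      have := Finset.card_le_card hFsub
      have := Finset.card_pos.mpr hXne
      simp only [Finset.card_singleton] at *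
      omega

theorem stmt7 {α : Type*} (S : List α) (h : 2 ≤ S.length) :
    {E : Set ℕ | ∃ u, u <:+: S ∧ u ≠ [] ∧ E = endPos S u}.ncard ≤ 2 * S.length - 1 := by
  classical
  set N := S.length with hN
  -- Finset version of endPos
  let eP : List α → Finset ℕ := fun u => (Finset.range N).filter (fun j => u <:+ S.take (j + 1))
  have heP : ∀ u, endPos S u = ↑(eP u) := by
    intro u
    ext j
    simp [endPos, eP, Finset.mem_filter, Finset.mem_range, and_comm, hN]
  set T : Set (Finset ℕ) := {t | ∃ u, u <:+: S ∧ u ≠ [] ∧ t = eP u} with hT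
  have himg : {E : Set ℕ | ∃ u, u <:+: S ∧ u ≠ [] ∧ E = endPos S u}
      = (fun t : Finset ℕ => (↑t : Set ℕ)) '' T := by
    ext E
    constructor
    · rintro ⟨u, h1, h2, rfl⟩
      exact ⟨eP u, ⟨u, h1, h2, rfl⟩, (heP u).symm⟩
    · rintro ⟨t, ⟨u, h1, h2, rfl⟩, rfl⟩
      exact ⟨u, h1, h2, (heP u).symm⟩
  have hTfin : T.Finite := by
    apply Set.Finite.subset (Finset.range N).powerset.finite_toSet
    rintro t ⟨u, _, _, rfl⟩
    simp only [Finset.coe_powerset, Set.mem_preimage, Set.mem_powerset_iff]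
    exact_mod_cast Finset.filter_subset _ _
  rw [himg, Set.ncard_image_of_injective _ Finset.coe_injective]
  have hcard : T.ncard = hTfin.toFinset.card := Set.ncard_eq_toFinset_card _ hTfin
  rw [hcard]
  have hbound := laminar_aux N (Finset.range N) hTfin.toFinset (by simp) ?_ ?_
  · simpa using hbound
  · -- each member is a nonempty subset of range N
    intro A hA
    rw [Set.Finite.mem_toFinset] at hA
    obtain ⟨u, hu, hune, rfl⟩ := hA
    refine ⟨Finset.filter_subset _ _, ?_⟩
    -- u occurs in S, get an end position
    obtain ⟨s, t, hst⟩ := hu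
    have hul : 1 ≤ u.length := by
      cases u with
      | nil => exact absurd rfl hune
      | cons a l => simp
    refine ⟨s.length + u.length - 1, ?_⟩
    simp only [eP, Finset.mem_filter, Finset.mem_range]
    have hlen : N = s.length + u.length + t.length := by
      rw [hN, ← hst]; simp [List.length_append]; omega
    constructor
    · omega
    · have h1 : s.length + u.length - 1 + 1 = (s ++ u).length := by
        simp [List.length_append]; omega
      rw [h1, ← hst]
      rw [List.append_assoc] at *
      have : (s ++ (u ++ t)).take (s ++ u).length = s ++ u := by
        rw [← List.append_assoc]
        exact List.take_left' rfl
      rw [this]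
      exact List.suffix_append s u
  · -- laminar
    intro A hA B hB
    rw [Set.Finite.mem_toFinset] at hA hB
    obtain ⟨u, hu, hune, rfl⟩ := hA
    obtain ⟨w, hw, hwne, rfl⟩ := hB
    by_cases hd : Disjoint (eP u) (eP w)
    · exact Or.inr (Or.inr hd)
    · rw [Finset.not_disjoint_iff] at hd
      obtain ⟨j, hj1, hj2⟩ := hd
      simp only [eP, Finset.mem_filter, Finset.mem_range] at hj1 hj2
      rcases List.suffix_or_suffix_of_suffix hj1.2 hj2.2 with hs | hs
      · -- u <:+ w : eP w ⊆ eP u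
        refine Or.inr (Or.inl ?_)
        intro k hk
        simp only [eP, Finset.mem_filter, Finset.mem_range] at *
        exact ⟨hk.1, hs.trans hk.2⟩
      · refine Or.inl ?_
        intro k hk
        simp only [eP, Finset.mem_filter, Finset.mem_range] at *
        exact ⟨hk.1, hs.trans hk.2⟩
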